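/- The Petersen graph admits a (1+√(7/3), 2)-NZF: an orientation and an assignment φ : E → ℝ² satisfying Kirchhoff's law at every vertex, such that the Euclidean norm of each flow value is one of 1, √(4/3), √(7/3); in particular all norms lie in [1, √(7/3)]. -/

import Mathlib

open scoped BigOperators

noncomputable section

/-- The vector `(x, y)` in the Euclidean plane `ℝ²`. -/
def vec2 (x y : ℝ) : EuclideanSpace ℝ (Fin 2) := (WithLp.equiv 2 (Fin 2 → ℝ)).symm ![x, y]

/-- `f` is a `d`-dimensional nowhere-zero `r`-flow ((r,d)-NZF) on the graph `G`.
We encode an orientation together with a flow as a skew-symmetric function on ordered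
pairs of vertices, supported on adjacent pairs, whose values (on edges) have Euclidean
norm in `[1, r-1]`, and which satisfies Kirchhoff's law at every vertex. -/
def IsNZF {V : Type} [Fintype V] (G : SimpleGraph V) (d : ℕ) (r : ℝ)
    (f : V → V → EuclideanSpace ℝ (Fin d)) : Prop :=
  (∀ u v, f u v = - f v u) ∧
  (∀ u v, ¬ G.Adj u v → f u v = 0) ∧
  (∀ u v, G.Adj u v → 1 ≤ ‖f u v‖ ∧ ‖f u v‖ ≤ r - 1) ∧
  (∀ v, ∑ u, f v u = 0)

/-- `G` admits an `(r,d)`-NZF. -/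
def HasNZF {V : Type} [Fintype V] (G : SimpleGraph V) (d : ℕ) (r : ℝ) : Prop :=
  ∃ f, IsNZF G d r f

/-- A graph is bridgeless if none of its edges is a bridge. -/
def Bridgeless {V : Type} (G : SimpleGraph V) : Prop :=
  ∀ e ∈ G.edgeSet, ¬ G.IsBridge e

/-- The Petersen graph, presented as the Kneser graph `K(5,2)`: vertices are the
2-element subsets of a 5-element set, adjacent when disjoint. -/
def petersenGraph : SimpleGraph {s : Finset (Fin 5) // s.card = 2} :=
  SimpleGraph.fromRel (fun a b => Disjoint a.1 b.1)

-- auxiliary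
instance : DecidableRel petersenGraph.Adj := fun a b => by
  rw [petersenGraph, SimpleGraph.fromRel_adj]; exact instDecidableAnd

abbrev PV := {s : Finset (Fin 5) // s.card = 2}

def enc (s : Finset (Fin 5)) : ℕ := s.sum (fun i => 2 ^ i.val)

def htbl : ℕ → ℕ → ℤ × ℤ
  | 3, 12 => (-3, 1)
  | 3, 20 => (1, -2)
  | 3, 24 => (2, 1)
  | 5, 10 => (-2, 3)
  | 5, 18 => (2, -1)
  | 5, 24 => (0, -2)
  | 9, 6 => (-1, -2)
  | 9, 18 => (-1, 2)
  | 9, 20 => (2, 0)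
  | 17, 6 => (-1, 3)
  | 17, 10 => (-1, -1)
  | 17, 12 => (2, -2)
  | 6, 24 => (-2, 1)
  | 10, 20 => (-3, 2)
  | 18, 12 => (1, 1)
  | _, _ => (0, 0)

def g (u v : PV) : ℤ × ℤ := htbl (enc u.1) (enc v.1) - htbl (enc v.1) (enc u.1)

lemma g_skew : ∀ u v : PV, g u v = - g v u := by
  intro u v; simp [g]

lemma g_not_adj : ∀ u v : PV, ¬ petersenGraph.Adj u v → g u v = 0 := by decide

lemma g_q : ∀ u v : PV, petersenGraph.Adj u v →
    (g u v).1 ^ 2 + (g u v).1 * (g u v).2 + (g u v).2 ^ 2 = 3 ∨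
    (g u v).1 ^ 2 + (g u v).1 * (g u v).2 + (g u v).2 ^ 2 = 4 ∨
    (g u v).1 ^ 2 + (g u v).1 * (g u v).2 + (g u v).2 ^ 2 = 7 := by decide

lemma g_sum : ∀ v : PV, ∑ u, g v u = 0 := by decide

def F (p : ℤ × ℤ) : EuclideanSpace ℝ (Fin 2) :=
  vec2 (((p.1 : ℝ) + (p.2 : ℝ) / 2) / Real.sqrt 3) ((p.2 : ℝ) / 2)

lemma vec2_add (a b c d : ℝ) : vec2 a b + vec2 c d = vec2 (a + c) (b + d) := by
  ext i; fin_cases i <;> simp [vec2]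

lemma F_add (p q : ℤ × ℤ) : F (p + q) = F p + F q := by
  simp only [F, vec2_add, Prod.fst_add, Prod.snd_add, Int.cast_add]
  congr 1 <;> ring

def Fhom : ℤ × ℤ →+ EuclideanSpace ℝ (Fin 2) := AddMonoidHom.mk' F F_add

lemma norm_vec2 (a b : ℝ) : ‖vec2 a b‖ = Real.sqrt (a ^ 2 + b ^ 2) := by
  rw [EuclideanSpace.norm_eq]
  simp [vec2, Fin.sum_univ_two, sq_abs]

lemma norm_F (p : ℤ × ℤ) :
    ‖F p‖ = Real.sqrt ((((p.1 : ℝ) ^ 2 + p.1 * p.2 + p.2 ^ 2)) / 3) := by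
  rw [F, norm_vec2]
  congr 1
  have h3 : (Real.sqrt 3) ^ 2 = 3 := Real.sq_sqrt (by norm_num)
  have h3' : Real.sqrt 3 ≠ 0 := by positivity
  field_simp
  ring_nf
  rw [h3]; ring

/-- The Petersen graph admits a `(1+√(7/3), 2)`-NZF in which the norm of every flow value
is one of `1`, `√(4/3)`, `√(7/3)`; in particular all norms lie in `[1, √(7/3)]`. -/
theorem stmt_14 :
    ∃ f, IsNZF petersenGraph 2 (1 + Real.sqrt (7/3)) f ∧
      ∀ u v, petersenGraph.Adj u v →
        ‖f u v‖ ∈ ({1, Real.sqrt (4/3), Real.sqrt (7/3)} : Set ℝ) := by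
  refine ⟨fun u v => F (g u v), ⟨?_, ?_, ?_, ?_⟩, ?_⟩
  · intro u v; show F (g u v) = - F (g v u); rw [g_skew u v, show F (-(g v u)) = Fhom (-(g v u)) from rfl, map_neg]; rfl
  · intro u v h; show F (g u v) = 0; rw [g_not_adj u v h, show F 0 = Fhom 0 from rfl, map_zero]
  · intro u v h
    have hn := norm_F (g u v)
    have h73 : (1:ℝ) ≤ Real.sqrt (7/3) := by
      rw [show (1:ℝ) = Real.sqrt 1 by simp]; exact Real.sqrt_le_sqrt (by norm_num)
    rcases g_q u v h with hq | hq | hq <;>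
      · rw [hn]
        have : ((g u v).1 : ℝ) ^ 2 + (g u v).1 * (g u v).2 + (g u v).2 ^ 2
            = ((((g u v).1 ^ 2 + (g u v).1 * (g u v).2 + (g u v).2 ^ 2 : ℤ)) : ℝ) := by
          push_cast; ring
        rw [this, hq]
        constructor
        · rw [show (1:ℝ) = Real.sqrt 1 by simp]; exact Real.sqrt_le_sqrt (by norm_num)
        · have : (1:ℝ) + Real.sqrt (7/3) - 1 = Real.sqrt (7/3) := by ring
          rw [this]; exact Real.sqrt_le_sqrt (by norm_num)
  · intro v
    have : ∑ u, F (g v u) = Fhom (∑ u, g v u) := by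
      rw [map_sum]; rfl
    rw [this, g_sum, map_zero]
  · intro u v h
    have hn := norm_F (g u v)
    have hc : ((g u v).1 : ℝ) ^ 2 + (g u v).1 * (g u v).2 + (g u v).2 ^ 2
        = ((((g u v).1 ^ 2 + (g u v).1 * (g u v).2 + (g u v).2 ^ 2 : ℤ)) : ℝ) := by
      push_cast; ring
    rcases g_q u v h with hq | hq | hq
    · left; rw [hn, hc, hq]; norm_num
    · right; left; rw [hn, hc, hq]; norm_num
    · right; right; rw [hn, hc, hq]; norm_num
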